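/- Let n ≥ 3, λ > 0 and let u : [0,1] → ℝ be a nontrivial C² solution of u'' + ((n-1)/r) u' + λ u + |u|^{4/(n-2)} u = 0 on (0,1) with u'(0)=0. If 0 ≤ r₁ ≤ r₂ < 1 are two points in the same nodal region (i.e. u has no zero in [r₁, r₂]) with |u(r₁)| ≤ |u(r₂)| and u'(r₁) = u'(r₂) = 0, then r₁ = r₂. -/

import Mathlib

open Set Filter

lemma BN_hasDerivAt_abs_rpow {s : ℝ} (hs : s ≠ 0) (p : ℝ) :
    HasDerivAt (fun x : ℝ => |x| ^ p) (p * |s| ^ (p - 2) * s) s := by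
  rcases hs.lt_or_gt with h | h
  · have h1 : HasDerivAt (fun x : ℝ => (-x) ^ p) (p * (-s) ^ (p - 1) * (-1)) s := by
      have h0 := (Real.hasDerivAt_rpow_const (p := p) (x := -s)
        (Or.inl (by linarith))).comp s (hasDerivAt_neg' s)
      exact h0.congr_deriv (by ring)
    have h2 : (fun x : ℝ => |x| ^ p) =ᶠ[nhds s] fun x => (-x) ^ p := by
      filter_upwards [Iio_mem_nhds h] with x hx
      rw [abs_of_neg hx]
    have h3 := h1.congr_of_eventuallyEq h2
    refine h3.congr_deriv ?_
    rw [abs_of_neg h]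
    have h4 : (-s) ^ (p - 1) = (-s) ^ (p - 2) * (-s) := by
      rw [show p - 1 = (p - 2) + 1 by ring, Real.rpow_add_one (by linarith)]
    rw [h4]; ring
  · have h1 : HasDerivAt (fun x : ℝ => x ^ p) (p * s ^ (p - 1)) s :=
      Real.hasDerivAt_rpow_const (Or.inl hs)
    have h2 : (fun x : ℝ => |x| ^ p) =ᶠ[nhds s] fun x => x ^ p := by
      filter_upwards [Ioi_mem_nhds h] with x hx
      rw [abs_of_pos hx]
    have h3 := h1.congr_of_eventuallyEq h2
    refine h3.congr_deriv ?_
    rw [abs_of_pos h]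
    rw [show p - 1 = (p - 2) + 1 by ring, Real.rpow_add_one hs]
    ring

/-- two critical points in the same nodal region with ordered
absolute values must coincide. -/
theorem critical_points_coincide (n : ℕ) (hn : 3 ≤ n) (lam : ℝ) (hlam : 0 < lam)
    (u : ℝ → ℝ) (hu : ContDiffOn ℝ 2 u (Set.Icc 0 1))
    (hnontriv : ¬ ∀ r ∈ Set.Icc (0:ℝ) 1, u r = 0)
    (hode : ∀ r ∈ Set.Ioo (0:ℝ) 1,
      deriv (deriv u) r + (((n:ℝ) - 1) / r) * deriv u r + lam * u r
        + |u r| ^ ((4:ℝ) / ((n:ℝ) - 2)) * u r = 0)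
    (hu0 : deriv u 0 = 0)
    (r₁ r₂ : ℝ) (h01 : 0 ≤ r₁) (h12 : r₁ ≤ r₂) (h21 : r₂ < 1)
    (hnodal : ∀ r ∈ Set.Icc r₁ r₂, u r ≠ 0)
    (habs : |u r₁| ≤ |u r₂|)
    (hd1 : deriv u r₁ = 0) (hd2 : deriv u r₂ = 0) :
    r₁ = r₂ := by
  by_contra hne
  have hlt : r₁ < r₂ := lt_of_le_of_ne h12 hne
  have hn3 : (3:ℝ) ≤ (n:ℝ) := by exact_mod_cast hn
  set q : ℝ := (4:ℝ) / ((n:ℝ) - 2) with hqdef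
  have hq : 0 < q := by
    apply div_pos (by norm_num); linarith
  set p : ℝ := q + 2 with hpdef
  have hp0 : 0 < p := by linarith
  have hp2 : p - 2 = q := by ring
  set g : ℝ → ℝ := derivWithin u (Set.Icc 0 1) with hgdef
  have hDu : UniqueDiffOn ℝ (Set.Icc (0:ℝ) 1) := uniqueDiffOn_Icc one_pos
  have hucont : ContinuousOn u (Set.Icc 0 1) := hu.continuousOn
  have hgcont : ContinuousOn g (Set.Icc 0 1) :=
    hu.continuousOn_derivWithin hDu one_le_two
  have hgeq : ∀ x ∈ Set.Ioo (0:ℝ) 1, g x = deriv u x := fun x hx =>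
    derivWithin_of_mem_nhds (Icc_mem_nhds hx.1 hx.2)
  -- the second derivative within
  have hg1' : ContDiffOn ℝ 1 g (Set.Icc 0 1) := by
    have := (contDiffOn_succ_iff_derivWithin hDu (n := 1)).1 (by rw [one_add_one_eq_two]; exact hu)
    exact this.2.2
  have hg2cont : ContinuousOn (derivWithin g (Set.Icc 0 1)) (Set.Icc 0 1) :=
    hg1'.continuousOn_derivWithin hDu le_rfl
  have hdu : ∀ x ∈ Set.Ioo (0:ℝ) 1, HasDerivAt u (deriv u x) x := by
    intro x hx
    have : DifferentiableAt ℝ u x :=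
      ((hu.mono Ioo_subset_Icc_self).differentiableOn two_ne_zero).differentiableAt
        (isOpen_Ioo.mem_nhds hx)
    exact this.hasDerivAt
  have hduC : ContDiffOn ℝ 1 (deriv u) (Set.Ioo 0 1) :=
    (hu.mono Ioo_subset_Icc_self).deriv_of_isOpen isOpen_Ioo (by norm_num)
  have hddu : ∀ x ∈ Set.Ioo (0:ℝ) 1, HasDerivAt (deriv u) (deriv (deriv u) x) x := by
    intro x hx
    exact (((hduC.differentiableOn one_ne_zero).differentiableAt
      (isOpen_Ioo.mem_nhds hx))).hasDerivAt
  -- deriv (deriv u) agrees with derivWithin g on the interior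
  have hdd_eq : ∀ x ∈ Set.Ioo (0:ℝ) 1,
      deriv (deriv u) x = derivWithin g (Set.Icc 0 1) x := by
    intro x hx
    have e1 : deriv u =ᶠ[nhds x] g := by
      filter_upwards [isOpen_Ioo.mem_nhds hx] with y hy
      exact (hgeq y hy).symm
    rw [e1.deriv_eq, derivWithin_of_mem_nhds (Icc_mem_nhds hx.1 hx.2)]
  -- bounds
  obtain ⟨B, hB⟩ := (isCompact_Icc (a := (0:ℝ)) (b := 1)).exists_bound_of_continuousOn hucont
  obtain ⟨M, hM⟩ := (isCompact_Icc (a := (0:ℝ)) (b := 1)).exists_bound_of_continuousOn hg2cont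
  have hB0 : 0 ≤ B := le_trans (norm_nonneg _) (hB 0 ⟨le_rfl, one_pos.le⟩)
  -- g(0) = 0
  have hgbound : ∀ x ∈ Set.Ioo (0:ℝ) 1,
      |g x| ≤ (M + lam * B + B ^ q * B) / ((n:ℝ) - 1) * x := by
    intro x hx
    have ho := hode x hx
    have hx0 : (0:ℝ) < x := hx.1
    have hux : |u x| ≤ B := hB x (Ioo_subset_Icc_self hx)
    have hM' : |deriv (deriv u) x| ≤ M := by
      rw [hdd_eq x hx]; exact hM x (Ioo_subset_Icc_self hx)
    have hrq : |u x| ^ q ≤ B ^ q := Real.rpow_le_rpow (abs_nonneg _) hux hq.le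
    have hrq0 : (0:ℝ) ≤ |u x| ^ q := Real.rpow_nonneg (abs_nonneg _) q
    have key : (((n:ℝ) - 1) / x) * deriv u x
        = -(deriv (deriv u) x + lam * u x + |u x| ^ q * u x) := by linarith
    have h1 : |(((n:ℝ) - 1) / x) * deriv u x| ≤ M + lam * B + B ^ q * B := by
      rw [key, abs_neg]
      calc |deriv (deriv u) x + lam * u x + |u x| ^ q * u x|
          ≤ |deriv (deriv u) x| + |lam * u x| + abs (|u x| ^ q * u x) := by
            exact (abs_add_le _ _).trans (add_le_add (abs_add_le _ _) le_rfl)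
        _ ≤ M + lam * B + B ^ q * B := by
            refine add_le_add (add_le_add hM' ?_) ?_
            · rw [abs_mul, abs_of_pos hlam]
              exact mul_le_mul_of_nonneg_left hux hlam.le
            · rw [abs_mul, abs_of_nonneg hrq0]
              exact mul_le_mul hrq hux (abs_nonneg _) (Real.rpow_nonneg hB0 q)
    have hn1 : (0:ℝ) < (n:ℝ) - 1 := by linarith
    have h2 : |(((n:ℝ) - 1) / x) * deriv u x| = (((n:ℝ) - 1) / x) * |deriv u x| := by
      rw [abs_mul, abs_of_pos (div_pos hn1 hx0)]
    rw [hgeq x hx]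
    rw [h2] at h1
    rw [div_mul_eq_mul_div, le_div_iff₀ hn1]
    calc |deriv u x| * ((n:ℝ) - 1)
        = ((((n:ℝ) - 1) / x) * |deriv u x|) * x := by field_simp
      _ ≤ (M + lam * B + B ^ q * B) * x := by
          exact mul_le_mul_of_nonneg_right h1 hx0.le
  have hg0 : g 0 = 0 := by
    have hcw : ContinuousWithinAt g (Set.Ioo 0 1) 0 :=
      (hgcont 0 ⟨le_rfl, one_pos.le⟩).mono Ioo_subset_Icc_self
    have hl : Tendsto g (nhdsWithin 0 (Set.Ioo (0:ℝ) 1)) (nhds (g 0)) := hcw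
    rw [nhdsWithin_Ioo_eq_nhdsGT one_pos] at hl
    have hr : Tendsto g (nhdsWithin 0 (Set.Ioi (0:ℝ))) (nhds 0) := by
      apply squeeze_zero_norm'
      · filter_upwards [Ioo_mem_nhdsGT_of_mem (Set.mem_Ico.2 ⟨le_rfl, one_pos⟩)] with x hx
        exact hgbound x hx
      · have : Tendsto (fun x : ℝ => (M + lam * B + B ^ q * B) / ((n:ℝ) - 1) * x)
            (nhds 0) (nhds 0) := by
          exact (continuous_const.mul continuous_id).tendsto' (0:ℝ) 0 (by simp)
        exact this.mono_left nhdsWithin_le_nhds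
    exact tendsto_nhds_unique hl hr
  -- g vanishes at both critical points
  have hr2pos : 0 < r₂ := lt_of_le_of_lt h01 hlt
  have hg_r1 : g r₁ = 0 := by
    rcases eq_or_lt_of_le h01 with h | h
    · rw [← h]; exact hg0
    · rw [hgeq r₁ ⟨h, lt_of_lt_of_le hlt h21.le⟩]; exact hd1
  have hg_r2 : g r₂ = 0 := by
    rw [hgeq r₂ ⟨hr2pos, h21⟩]; exact hd2
  -- the energy
  set E : ℝ → ℝ := fun r => g r ^ 2 / 2 + lam * u r ^ 2 / 2 + |u r| ^ p / p with hEdef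
  have hsub : Set.Icc r₁ r₂ ⊆ Set.Icc (0:ℝ) 1 := Set.Icc_subset_Icc h01 h21.le
  have hsubo : Set.Ioo r₁ r₂ ⊆ Set.Ioo (0:ℝ) 1 := Set.Ioo_subset_Ioo h01 h21.le
  have hEcont : ContinuousOn E (Set.Icc r₁ r₂) := by
    apply ContinuousOn.add
    apply ContinuousOn.add
    · exact (((hgcont.mono hsub).pow 2)).div_const 2
    · exact ((continuousOn_const.mul (((hucont.mono hsub)).pow 2))).div_const 2
    · exact ((Real.continuous_rpow_const hp0.le).comp continuous_abs).comp_continuousOn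
        (hucont.mono hsub) |>.div_const p
  have hED : ∀ t ∈ Set.Ioo r₁ r₂,
      HasDerivAt E (-((((n:ℝ) - 1) / t)) * deriv u t ^ 2) t := by
    intro t ht
    have ht1 : t ∈ Set.Ioo (0:ℝ) 1 := hsubo ht
    have hut : u t ≠ 0 := hnodal t (Ioo_subset_Icc_self ht)
    have d1 : HasDerivAt u (deriv u t) t := hdu t ht1
    have d2 : HasDerivAt (deriv u) (deriv (deriv u) t) t := hddu t ht1
    have d3 : HasDerivAt (fun r => |u r| ^ p) ((p * |u t| ^ (p - 2) * u t) * deriv u t) t :=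
      (BN_hasDerivAt_abs_rpow hut p).comp t d1
    have dE : HasDerivAt (fun r => deriv u r ^ 2 / 2 + lam * u r ^ 2 / 2 + |u r| ^ p / p)
        (deriv u t * deriv (deriv u) t + lam * (u t * deriv u t)
          + |u t| ^ q * u t * deriv u t) t := by
      have e1 : HasDerivAt (fun r => deriv u r ^ 2 / 2) (deriv u t * deriv (deriv u) t) t := by
        have h := (d2.mul d2).div_const 2
        have heq' : (fun r => deriv u r ^ 2 / 2) = fun x => deriv u x * deriv u x / 2 := by
          funext x; ring
        rw [heq']
        refine h.congr_deriv ?_; ring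
      have e2 : HasDerivAt (fun r => lam * u r ^ 2 / 2) (lam * (u t * deriv u t)) t := by
        have h := ((d1.mul d1).const_mul lam).div_const 2
        have heq' : (fun r => lam * u r ^ 2 / 2) = fun x => lam * (u x * u x) / 2 := by
          funext x; ring
        rw [heq']
        refine h.congr_deriv ?_; ring
      have e3 : HasDerivAt (fun r => |u r| ^ p / p) (|u t| ^ q * u t * deriv u t) t := by
        have := d3.div_const p
        refine this.congr_deriv ?_
        rw [hp2]; field_simp
      exact (e1.add e2).add e3
    have heq : E =ᶠ[nhds t] fun r => deriv u r ^ 2 / 2 + lam * u r ^ 2 / 2 + |u r| ^ p / p := by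
      filter_upwards [isOpen_Ioo.mem_nhds ht1] with x hx
      rw [hEdef]; simp only [hgeq x hx]
    have hE' := dE.congr_of_eventuallyEq heq
    refine hE'.congr_deriv ?_
    have ho := hode t ht1
    have : deriv (deriv u) t = -((((n:ℝ) - 1) / t) * deriv u t + lam * u t
        + |u t| ^ q * u t) := by rw [hqdef]; linarith
    rw [this]; ring
  have hanti : AntitoneOn E (Set.Icc r₁ r₂) := by
    apply antitoneOn_of_deriv_nonpos (convex_Icc r₁ r₂) hEcont
    · intro t ht
      rw [interior_Icc] at ht
      exact (hED t ht).differentiableAt.differentiableWithinAt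
    · intro t ht
      rw [interior_Icc] at ht
      rw [(hED t ht).deriv]
      have ht0 : 0 < t := lt_of_le_of_lt h01 ht.1
      have hn1 : (0:ℝ) ≤ ((n:ℝ) - 1) / t := div_nonneg (by linarith) ht0.le
      have := mul_nonneg hn1 (sq_nonneg (deriv u t))
      linarith
  have hmem1 : r₁ ∈ Set.Icc r₁ r₂ := ⟨le_rfl, hlt.le⟩
  have hmem2 : r₂ ∈ Set.Icc r₁ r₂ := ⟨hlt.le, le_rfl⟩
  have hE12 : E r₂ ≤ E r₁ := hanti hmem1 hmem2 hlt.le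
  have hE1 : E r₁ = lam * u r₁ ^ 2 / 2 + |u r₁| ^ p / p := by
    rw [hEdef]; simp [hg_r1]
  have hE2 : E r₂ = lam * u r₂ ^ 2 / 2 + |u r₂| ^ p / p := by
    rw [hEdef]; simp [hg_r2]
  have hE21 : E r₁ ≤ E r₂ := by
    rw [hE1, hE2]
    have h1 : u r₁ ^ 2 ≤ u r₂ ^ 2 := by
      rw [← sq_abs (u r₁), ← sq_abs (u r₂)]
      exact pow_le_pow_left₀ (abs_nonneg _) habs 2
    have h2 : |u r₁| ^ p ≤ |u r₂| ^ p := Real.rpow_le_rpow (abs_nonneg _) habs hp0.le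
    have h1' : lam * u r₁ ^ 2 / 2 ≤ lam * u r₂ ^ 2 / 2 := by nlinarith
    have h2' : |u r₁| ^ p / p ≤ |u r₂| ^ p / p := by gcongr
    linarith
  have hEeq : E r₁ = E r₂ := le_antisymm hE21 hE12
  have hconst : ∀ t ∈ Set.Icc r₁ r₂, E t = E r₁ := by
    intro t ht
    refine le_antisymm (hanti hmem1 ht ht.1) ?_
    rw [hEeq]
    exact hanti ht hmem2 ht.2
  have hderiv0 : ∀ t ∈ Set.Ioo r₁ r₂, deriv u t = 0 := by
    intro t ht
    have hEc : E =ᶠ[nhds t] fun _ => E r₁ := by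
      filter_upwards [isOpen_Ioo.mem_nhds ht] with x hx
      exact hconst x (Ioo_subset_Icc_self hx)
    have h0 : HasDerivAt E 0 t := (hasDerivAt_const t (E r₁)).congr_of_eventuallyEq hEc
    have huniq := (hED t ht).unique h0
    have ht0 : 0 < t := lt_of_le_of_lt h01 ht.1
    have hn1 : (0:ℝ) < ((n:ℝ) - 1) / t := div_pos (by linarith) ht0
    have hsq : ((n:ℝ) - 1) / t * deriv u t ^ 2 = 0 := by linarith
    exact sq_eq_zero_iff.1 ((mul_eq_zero.1 hsq).resolve_left hn1.ne')
  set m : ℝ := (r₁ + r₂) / 2 with hmdef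
  have hm : m ∈ Set.Ioo r₁ r₂ := ⟨by rw [hmdef]; linarith, by rw [hmdef]; linarith⟩
  have hm1 : m ∈ Set.Ioo (0:ℝ) 1 := hsubo hm
  have hdd0 : deriv (deriv u) m = 0 := by
    have e1 : deriv u =ᶠ[nhds m] fun _ => 0 := by
      filter_upwards [isOpen_Ioo.mem_nhds hm] with x hx
      exact hderiv0 x hx
    rw [e1.deriv_eq, deriv_const]
  have ho := hode m hm1
  rw [hdd0, hderiv0 m hm] at ho
  have hum : u m ≠ 0 := hnodal m (Ioo_subset_Icc_self hm)
  have hpos : 0 < lam + |u m| ^ q := by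
    have := Real.rpow_nonneg (abs_nonneg (u m)) q
    linarith
  have : u m * (lam + |u m| ^ q) = 0 := by rw [hqdef] at *; linarith
  rcases mul_eq_zero.1 this with h | h
  · exact hum h
  · exact hpos.ne' h
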